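/- Let U, Ũ ⊆ ℝⁿ be open sets such that U is convex and the closure of U is compact and contained in Ũ. Let F : Ũ × ℝⁿ → ℝ be a horizontally C¹ family of asymmetric norms. Then there exists a constant C₁ > 0 such that |F_*(x₁, α) − F_*(x₂, α)| ≤ C₁‖α‖‖x₁ − x₂‖ for every α ∈ ℝⁿ and all x₁, x₂ ∈ U, where ‖·‖ is the Euclidean norm. -/

import Mathlib

open scoped RealInnerProductSpace

/-- `ℝⁿ` with the Euclidean inner product. -/
abbrev En (n : ℕ) := EuclideanSpace ℝ (Fin n)

/-- An asymmetric norm on `ℝⁿ`. -/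
def IsAsymNorm {n : ℕ} (F : En n → ℝ) : Prop :=
  (∀ y, 0 ≤ F y) ∧ (∀ y, F y = 0 ↔ y = 0) ∧
  (∀ l : ℝ, 0 < l → ∀ y, F (l • y) = l * F y) ∧
  (∀ y₁ y₂, F (y₁ + y₂) ≤ F y₁ + F y₂)

/-- A horizontally `C¹` family of asymmetric norms on `Ut × ℝⁿ`: `F` is continuous,
each `F x` is an asymmetric norm, and the partial derivative of `F` with respect to
the (horizontal) variable `x` exists everywhere and is continuous. -/
def HorizC1Family {n : ℕ} (Ut : Set (En n)) (F : En n → En n → ℝ) : Prop :=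
  ContinuousOn (fun p : En n × En n => F p.1 p.2) (Ut ×ˢ Set.univ) ∧
  (∀ x ∈ Ut, IsAsymNorm (F x)) ∧
  ∃ DF : En n × En n → (En n →L[ℝ] ℝ),
    (∀ x ∈ Ut, ∀ y, HasFDerivAt (fun x' => F x' y) (DF (x, y)) x) ∧
    ContinuousOn DF (Ut ×ˢ Set.univ)

/-- The family of dual asymmetric norms `F_*(x, α) = sup {⟨α, y⟩ : F x y ≤ 1}`. -/
noncomputable def dualNormF {n : ℕ} (F : En n → En n → ℝ) (x α : En n) : ℝ :=
  sSup ((fun y => ⟪α, y⟫) '' {y | F x y ≤ 1})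

/-- Horizontal Lipschitz estimate for the family of dual norms. -/
theorem dual_family_horizontal_lipschitz {n : ℕ} (U Ut : Set (En n))
    (hU : IsOpen U) (hUt : IsOpen Ut) (hUconv : Convex ℝ U)
    (hcomp : IsCompact (closure U)) (hsub : closure U ⊆ Ut)
    (F : En n → En n → ℝ) (hF : HorizC1Family Ut F) :
    ∃ C₁ > (0 : ℝ), ∀ α : En n, ∀ x₁ ∈ U, ∀ x₂ ∈ U,
      |dualNormF F x₁ α - dualNormF F x₂ α| ≤ C₁ * ‖α‖ * ‖x₁ - x₂‖ := by
  obtain ⟨hFcont, hFnorm, DF, hDF, hDFcont⟩ := hF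
  rcases Set.eq_empty_or_nonempty U with hUe | hUne
  · exact ⟨1, one_pos, fun α x₁ hx₁ => absurd hx₁ (by simp [hUe])⟩
  rcases Nat.eq_zero_or_pos n with hn | hn
  · subst hn
    refine ⟨1, one_pos, fun α x₁ hx₁ x₂ hx₂ => ?_⟩
    have hx : x₁ = x₂ := PiLp.ext fun i => i.elim0
    simp [hx, mul_nonneg, norm_nonneg]
  -- `F x 0 = 0`
  have hF0 : ∀ x ∈ Ut, F x 0 = 0 := fun x hx => ((hFnorm x hx).2.1 0).mpr rfl
  -- lower bound `a` for `F` on the unit sphere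
  have hKc : IsCompact ((closure U) ×ˢ (Metric.sphere (0 : En n) 1)) :=
    hcomp.prod (isCompact_sphere 0 1)
  have hKne : ((closure U) ×ˢ (Metric.sphere (0 : En n) 1)).Nonempty := by
    refine ⟨(hUne.some, EuclideanSpace.single ⟨0, hn⟩ (1 : ℝ)),
      subset_closure hUne.some_mem, ?_⟩
    simp [mem_sphere_zero_iff_norm, EuclideanSpace.norm_single]
  have hsubK : (closure U) ×ˢ (Metric.sphere (0 : En n) 1) ⊆ Ut ×ˢ Set.univ :=
    fun p hp => ⟨hsub hp.1, trivial⟩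
  obtain ⟨p₀, hp₀, hmin⟩ := hKc.exists_isMinOn hKne (hFcont.mono hsubK)
  set a := F p₀.1 p₀.2 with ha
  have ha0 : 0 < a := by
    rcases ((hFnorm p₀.1 (hsub hp₀.1)).1 p₀.2).eq_or_lt with h | h
    · exfalso
      have h0 : p₀.2 = 0 := ((hFnorm p₀.1 (hsub hp₀.1)).2.1 p₀.2).mp h.symm
      have hy : p₀.2 ∈ Metric.sphere (0 : En n) 1 := hp₀.2
      rw [h0, mem_sphere_zero_iff_norm] at hy
      simp at hy
    · exact h
  have hlow : ∀ x ∈ closure U, ∀ y : En n, a * ‖y‖ ≤ F x y := by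
    intro x hx y
    rcases eq_or_ne y 0 with rfl | hy
    · simp [hF0 x (hsub hx)]
    · have hny : 0 < ‖y‖ := norm_pos_iff.mpr hy
      have hu : (‖y‖⁻¹ • y) ∈ Metric.sphere (0 : En n) 1 := by
        simp [mem_sphere_zero_iff_norm, norm_smul, abs_of_pos (inv_pos.mpr hny),
          inv_mul_cancel₀ hny.ne']
      have hm : F p₀.1 p₀.2 ≤ F x (‖y‖⁻¹ • y) := hmin (Set.mk_mem_prod hx hu)
      have hsc : F x (‖y‖⁻¹ • y) = ‖y‖⁻¹ * F x y :=
        (hFnorm x (hsub hx)).2.2.1 (‖y‖⁻¹) (inv_pos.mpr hny) y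
      rw [hsc] at hm
      calc a * ‖y‖ ≤ (‖y‖⁻¹ * F x y) * ‖y‖ := by nlinarith
        _ = F x y := by field_simp
  -- upper bound `M` for the derivative on the unit ball
  have hK'c : IsCompact ((closure U) ×ˢ (Metric.closedBall (0 : En n) 1)) :=
    hcomp.prod (isCompact_closedBall 0 1)
  have hsubK' : (closure U) ×ˢ (Metric.closedBall (0 : En n) 1) ⊆ Ut ×ˢ Set.univ :=
    fun p hp => ⟨hsub hp.1, trivial⟩
  obtain ⟨M, hM⟩ := hK'c.exists_bound_of_continuousOn (hDFcont.mono hsubK')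
  have hM0 : 0 ≤ M :=
    le_trans (norm_nonneg _)
      (hM (hUne.some, 0) ⟨subset_closure hUne.some_mem, by simp⟩)
  -- mean value estimate
  have hclconv : Convex ℝ (closure U) := hUconv.closure
  have hmv1 : ∀ y : En n, ‖y‖ ≤ 1 → ∀ x₁ ∈ closure U, ∀ x₂ ∈ closure U,
      |F x₁ y - F x₂ y| ≤ M * ‖x₁ - x₂‖ := by
    intro y hy x₁ hx₁ x₂ hx₂
    have := Convex.norm_image_sub_le_of_norm_hasFDerivWithin_le
      (f := fun x => F x y) (f' := fun x => DF (x, y)) (s := closure U) (C := M)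
      (fun x hx => (hDF x (hsub hx) y).hasFDerivWithinAt)
      (fun x hx => hM (x, y) ⟨hx, by simpa [Metric.mem_closedBall, dist_zero_right] using hy⟩)
      hclconv hx₂ hx₁
    simpa [Real.norm_eq_abs] using this
  have hmv : ∀ y : En n, ∀ x₁ ∈ closure U, ∀ x₂ ∈ closure U,
      |F x₁ y - F x₂ y| ≤ M * ‖y‖ * ‖x₁ - x₂‖ := by
    intro y x₁ hx₁ x₂ hx₂
    rcases eq_or_ne y 0 with rfl | hy
    · simp [hF0 x₁ (hsub hx₁), hF0 x₂ (hsub hx₂)]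
    · have hny : 0 < ‖y‖ := norm_pos_iff.mpr hy
      have hu : ‖(‖y‖⁻¹ • y)‖ ≤ 1 := by
        simp [norm_smul, abs_of_pos (inv_pos.mpr hny), inv_mul_cancel₀ hny.ne']
      have h1 := hmv1 _ hu x₁ hx₁ x₂ hx₂
      have e1 : F x₁ (‖y‖⁻¹ • y) = ‖y‖⁻¹ * F x₁ y :=
        (hFnorm x₁ (hsub hx₁)).2.2.1 (‖y‖⁻¹) (inv_pos.mpr hny) y
      have e2 : F x₂ (‖y‖⁻¹ • y) = ‖y‖⁻¹ * F x₂ y :=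
        (hFnorm x₂ (hsub hx₂)).2.2.1 (‖y‖⁻¹) (inv_pos.mpr hny) y
      rw [e1, e2, ← mul_sub, abs_mul, abs_of_pos (inv_pos.mpr hny)] at h1
      calc |F x₁ y - F x₂ y| = ‖y‖ * (‖y‖⁻¹ * |F x₁ y - F x₂ y|) := by field_simp
        _ ≤ ‖y‖ * (M * ‖x₁ - x₂‖) := mul_le_mul_of_nonneg_left h1 (norm_nonneg y)
        _ = M * ‖y‖ * ‖x₁ - x₂‖ := by ring
  -- basic facts about the dual norm
  have hmem0 : ∀ α : En n, ∀ x ∈ closure U,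
      (0 : ℝ) ∈ (fun y => ⟪α, y⟫) '' {y | F x y ≤ 1} :=
    fun α x hx => ⟨0, by simp [hF0 x (hsub hx)], by simp⟩
  have hub : ∀ α : En n, ∀ x ∈ closure U,
      ∀ z ∈ (fun y => ⟪α, y⟫) '' {y | F x y ≤ 1}, z ≤ ‖α‖ * a⁻¹ := by
    rintro α x hx z ⟨y, hy, rfl⟩
    have hyn : ‖y‖ ≤ a⁻¹ := by
      have := hlow x hx y
      have hy' : F x y ≤ 1 := hy
      calc ‖y‖ = a⁻¹ * (a * ‖y‖) := by field_simp
        _ ≤ a⁻¹ * 1 := mul_le_mul_of_nonneg_left (le_trans this hy') (inv_nonneg.mpr ha0.le)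
        _ = a⁻¹ := mul_one _
    calc ⟪α, y⟫ ≤ ‖α‖ * ‖y‖ := real_inner_le_norm α y
      _ ≤ ‖α‖ * a⁻¹ := mul_le_mul_of_nonneg_left hyn (norm_nonneg α)
  have hbdd : ∀ α : En n, ∀ x ∈ closure U,
      BddAbove ((fun y => ⟪α, y⟫) '' {y | F x y ≤ 1}) :=
    fun α x hx => ⟨‖α‖ * a⁻¹, fun z hz => hub α x hx z hz⟩
  have hdub : ∀ α : En n, ∀ x ∈ closure U, dualNormF F x α ≤ ‖α‖ * a⁻¹ :=
    fun α x hx => csSup_le ⟨0, hmem0 α x hx⟩ (hub α x hx)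
  have hdnn : ∀ α : En n, ∀ x ∈ closure U, 0 ≤ dualNormF F x α :=
    fun α x hx => le_csSup (hbdd α x hx) (hmem0 α x hx)
  -- the key one-sided estimate
  have hkey : ∀ α : En n, ∀ x₁ ∈ closure U, ∀ x₂ ∈ closure U,
      dualNormF F x₁ α ≤ dualNormF F x₂ α + (M * a⁻¹ * a⁻¹) * ‖α‖ * ‖x₁ - x₂‖ := by
    intro α x₁ hx₁ x₂ hx₂
    apply csSup_le ⟨0, hmem0 α x₁ hx₁⟩
    rintro z ⟨y, hy, rfl⟩
    have hy' : F x₁ y ≤ 1 := hy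
    set d := ‖x₁ - x₂‖ with hd
    have hd0 : 0 ≤ d := norm_nonneg _
    set c := M * a⁻¹ * d with hc
    have hc0 : 0 ≤ c := by positivity
    have hyn : ‖y‖ ≤ a⁻¹ := by
      have := hlow x₁ hx₁ y
      calc ‖y‖ = a⁻¹ * (a * ‖y‖) := by field_simp
        _ ≤ a⁻¹ * 1 := mul_le_mul_of_nonneg_left (le_trans this hy') (inv_nonneg.mpr ha0.le)
        _ = a⁻¹ := mul_one _
    have h2 : F x₂ y ≤ 1 + c := by
      have habs := hmv y x₂ hx₂ x₁ hx₁
      rw [norm_sub_rev x₂ x₁, ← hd] at habs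
      have h2' : F x₂ y - F x₁ y ≤ M * ‖y‖ * d := (abs_le.mp habs).2
      have : M * ‖y‖ * d ≤ M * a⁻¹ * d := by
        have := mul_le_mul_of_nonneg_left hyn hM0
        nlinarith
      rw [hc]; linarith
    have h1c : (0 : ℝ) < 1 + c := by linarith
    have h3 : F x₂ ((1 + c)⁻¹ • y) ≤ 1 := by
      rw [(hFnorm x₂ (hsub hx₂)).2.2.1 ((1 + c)⁻¹) (inv_pos.mpr h1c) y]
      rw [inv_mul_le_iff₀ h1c]
      linarith
    have h4 : ⟪α, (1 + c)⁻¹ • y⟫ ≤ dualNormF F x₂ α :=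
      le_csSup (hbdd α x₂ hx₂) ⟨_, h3, rfl⟩
    rw [real_inner_smul_right] at h4
    have h5 : ⟪α, y⟫ ≤ (1 + c) * dualNormF F x₂ α := by
      calc ⟪α, y⟫ = (1 + c) * ((1 + c)⁻¹ * ⟪α, y⟫) := by field_simp
        _ ≤ (1 + c) * dualNormF F x₂ α := mul_le_mul_of_nonneg_left h4 h1c.le
    have hub2 := hdub α x₂ hx₂
    have hnn2 := hdnn α x₂ hx₂
    calc ⟪α, y⟫ ≤ (1 + c) * dualNormF F x₂ α := h5
      _ = dualNormF F x₂ α + c * dualNormF F x₂ α := by ring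
      _ ≤ dualNormF F x₂ α + c * (‖α‖ * a⁻¹) := by nlinarith
      _ = dualNormF F x₂ α + (M * a⁻¹ * a⁻¹) * ‖α‖ * d := by rw [hc]; ring
  refine ⟨M * a⁻¹ * a⁻¹ + 1, by positivity, fun α x₁ hx₁ x₂ hx₂ => ?_⟩
  have h1 := hkey α x₁ (subset_closure hx₁) x₂ (subset_closure hx₂)
  have h2 := hkey α x₂ (subset_closure hx₂) x₁ (subset_closure hx₁)
  rw [norm_sub_rev x₂ x₁] at h2
  rw [abs_sub_le_iff]
  constructor <;> nlinarith [mul_nonneg (norm_nonneg α) (norm_nonneg (x₁ - x₂))]
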